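/- Let ψ be a unit eigenvector of H = h₀I + ∑ᵢ hᵢCᵢ, where the Cᵢ are pairwise anticommuting self-adjoint unitaries and not all hᵢ are zero (i > 0). Then the eigenvalue of ψ equals h₀ + ∑ᵢ hᵢ⟨ψ, Cᵢψ⟩, and ∑ᵢ ⟨ψ, Cᵢψ⟩² = 1. -/

import Mathlib

open Matrix

theorem stmt15_sqlem {d N : ℕ} (C : Fin N → Matrix (Fin d) (Fin d) ℂ)
    (hunit : ∀ i, C i * C i = 1)
    (hanti : ∀ i j, i ≠ j → C i * C j = -(C j * C i)) (a : Fin N → ℝ) :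
    (∑ i, (a i : ℂ) • C i) * (∑ j, (a j : ℂ) • C j)
      = ((∑ i, a i ^ 2 : ℝ) : ℂ) • 1 := by
  have key : ∀ i j : Fin N, ((a i : ℂ) • C i) * ((a j : ℂ) • C j) + ((a j : ℂ) • C j) * ((a i : ℂ) • C i)
      = if i = j then ((2 * a i ^ 2 : ℝ) : ℂ) • 1 else 0 := by
    intro i j
    by_cases hij : i = j
    · subst hij
      simp only [if_pos rfl, Matrix.smul_mul, Matrix.mul_smul, hunit i, smul_smul]
      push_cast
      module
    · simp only [if_neg hij, Matrix.smul_mul, Matrix.mul_smul, hanti i j hij, smul_smul,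
        smul_neg]
      rw [mul_comm ((a j : ℂ))]
      exact neg_add_cancel _
  have h2 : (2 : ℂ) • ((∑ i, (a i : ℂ) • C i) * (∑ j, (a j : ℂ) • C j))
      = (2 : ℂ) • (((∑ i, a i ^ 2 : ℝ) : ℂ) • 1) := by
    rw [Finset.sum_mul_sum]
    have swap : ∑ i : Fin N, ∑ j : Fin N, ((a i : ℂ) • C i) * ((a j : ℂ) • C j)
        = ∑ i : Fin N, ∑ j : Fin N, ((a j : ℂ) • C j) * ((a i : ℂ) • C i) := Finset.sum_comm
    rw [two_smul]
    nth_rewrite 2 [swap]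
    rw [← Finset.sum_add_distrib]
    simp_rw [← Finset.sum_add_distrib, key]
    simp only [Finset.sum_ite_eq, Finset.mem_univ, if_true]
    rw [← Finset.sum_smul, smul_smul]
    congr 1
    push_cast
    rw [Finset.mul_sum]
  exact smul_right_injective _ two_ne_zero h2

theorem stmt15_linlem {d N : ℕ} (C : Fin N → Matrix (Fin d) (Fin d) ℂ) (ψ : Fin d → ℂ)
    (a : Fin N → ℝ) :
    star ψ ⬝ᵥ (∑ i, (a i : ℂ) • C i).mulVec ψ = ∑ i, (a i : ℂ) * (star ψ ⬝ᵥ (C i).mulVec ψ) := by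
  induction (Finset.univ : Finset (Fin N)) using Finset.induction with
  | empty => simp [Matrix.zero_mulVec]
  | insert _ _ h ih => simp [Finset.sum_insert h, Matrix.add_mulVec, Matrix.smul_mulVec,
      dotProduct_add, dotProduct_smul, smul_eq_mul]; exact ih

theorem stmt15_inner {d : ℕ} (u v : Fin d → ℂ) :
    inner ℂ ((WithLp.equiv 2 (Fin d → ℂ)).symm u : EuclideanSpace ℂ (Fin d))
      ((WithLp.equiv 2 (Fin d → ℂ)).symm v) = star u ⬝ᵥ v := by
  rw [dotProduct_comm]; rfl

theorem stmt15 {d N : ℕ} (C : Fin N → Matrix (Fin d) (Fin d) ℂ)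
    (hsa : ∀ i, (C i)ᴴ = C i) (hunit : ∀ i, C i * C i = 1)
    (hanti : ∀ i j, i ≠ j → C i * C j = -(C j * C i))
    (h0 : ℝ) (h : Fin N → ℝ) (hne : ∃ i, h i ≠ 0)
    (ψ : Fin d → ℂ) (hψ : star ψ ⬝ᵥ ψ = 1) (μ : ℂ)
    (heig : ((h0 : ℂ) • (1 : Matrix (Fin d) (Fin d) ℂ) + ∑ i, (h i : ℂ) • C i).mulVec ψ
      = μ • ψ) :
    μ = ((h0 + ∑ i, h i * (star ψ ⬝ᵥ (C i).mulVec ψ).re : ℝ) : ℂ) ∧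
    ∑ i, ((star ψ ⬝ᵥ (C i).mulVec ψ).re) ^ 2 = 1 := by
  set e : Fin N → ℝ := fun i => (star ψ ⬝ᵥ (C i).mulVec ψ).re with hedef
  have hreal : ∀ i, star ψ ⬝ᵥ (C i).mulVec ψ = ((e i : ℝ) : ℂ) := by
    intro i
    have h1 : (starRingEnd ℂ) (star ψ ⬝ᵥ (C i).mulVec ψ) = star ψ ⬝ᵥ (C i).mulVec ψ := by
      show star (star ψ ⬝ᵥ (C i).mulVec ψ) = star ψ ⬝ᵥ (C i).mulVec ψ
      rw [← star_dotProduct ((C i).mulVec ψ) ψ, Matrix.star_mulVec, hsa i,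
        ← Matrix.dotProduct_mulVec]
    exact ((Complex.conj_eq_iff_re).mp h1).symm
  -- eigen-equation for the traceless part
  have hH1 : (∑ i, (h i : ℂ) • C i).mulVec ψ = (μ - (h0 : ℂ)) • ψ := by
    rw [Matrix.add_mulVec, Matrix.smul_mulVec, Matrix.one_mulVec] at heig
    rw [sub_smul]
    rw [← heig]
    abel
  have key1 : ∑ i, (h i : ℂ) * (star ψ ⬝ᵥ (C i).mulVec ψ) = μ - (h0 : ℂ) := by
    have := congrArg (fun v => star ψ ⬝ᵥ v) hH1
    simp only [dotProduct_smul, smul_eq_mul, hψ, mul_one] at this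
    rw [← stmt15_linlem C ψ h]
    exact this
  have hmu : μ = ((h0 + ∑ i, h i * e i : ℝ) : ℂ) := by
    have h2 : μ = (h0 : ℂ) + ∑ i, (h i : ℂ) * (star ψ ⬝ᵥ (C i).mulVec ψ) := by
      rw [key1]; ring
    rw [h2]
    push_cast
    congr 1
    exact Finset.sum_congr rfl fun i _ => by rw [hreal i]
  -- (μ - h0)^2 = ∑ h i ^2
  have hsqeig : ((∑ i, h i ^ 2 : ℝ) : ℂ) = (μ - (h0 : ℂ)) ^ 2 := by
    have h2 : ((∑ i, (h i : ℂ) • C i) * (∑ j, (h j : ℂ) • C j)).mulVec ψ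
        = ((μ - (h0 : ℂ)) ^ 2) • ψ := by
      rw [← Matrix.mulVec_mulVec, hH1, Matrix.mulVec_smul, hH1, smul_smul, sq]
    rw [stmt15_sqlem C hunit hanti h] at h2
    have := congrArg (fun v => star ψ ⬝ᵥ v) h2
    simp only [Matrix.smul_mulVec, Matrix.one_mulVec, dotProduct_smul, smul_eq_mul,
      hψ, mul_one] at this
    exact this
  have hnormeq : (∑ i, h i * e i) ^ 2 = ∑ i, h i ^ 2 := by
    have : ((∑ i, h i ^ 2 : ℝ) : ℂ) = (((∑ i, h i * e i) ^ 2 : ℝ) : ℂ) := by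
      rw [hsqeig, hmu]
      push_cast
      ring
    exact_mod_cast this.symm
  set s : ℝ := ∑ i, e i ^ 2 with hsdef
  have hs_nonneg : 0 ≤ s := Finset.sum_nonneg fun i _ => sq_nonneg _
  -- lower bound: 1 ≤ s
  have hhpos : 0 < ∑ i, h i ^ 2 := by
    obtain ⟨i, hi⟩ := hne
    exact Finset.sum_pos' (fun j _ => sq_nonneg _) ⟨i, Finset.mem_univ i, by positivity⟩
  have hlow : 1 ≤ s := by
    have cs := Finset.sum_mul_sq_le_sq_mul_sq Finset.univ h e
    rw [hnormeq] at cs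
    nlinarith [hhpos]
  -- upper bound: s ≤ 1 via Cauchy-Schwarz in EuclideanSpace
  have hAsa : (∑ i, (e i : ℂ) • C i)ᴴ = ∑ i, (e i : ℂ) • C i := by
    rw [Matrix.conjTranspose_sum]
    refine Finset.sum_congr rfl fun i _ => ?_
    rw [Matrix.conjTranspose_smul, hsa i, Complex.star_def, Complex.conj_ofReal]
  set A : Matrix (Fin d) (Fin d) ℂ := ∑ i, (e i : ℂ) • C i with hAdef
  set φ : Fin d → ℂ := A.mulVec ψ with hφdef
  have hinner : star ψ ⬝ᵥ φ = ((s : ℝ) : ℂ) := by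
    rw [hφdef, hAdef, stmt15_linlem C ψ e]
    have hterm : ∀ i, (e i : ℂ) * (star ψ ⬝ᵥ (C i).mulVec ψ) = ((e i ^ 2 : ℝ) : ℂ) := by
      intro i; rw [hreal i]; push_cast; ring
    rw [Finset.sum_congr rfl fun i _ => hterm i, hsdef]
    push_cast
    rfl
  have hφφ : star φ ⬝ᵥ φ = (s : ℂ) := by
    rw [hφdef, Matrix.star_mulVec, hAsa, ← Matrix.dotProduct_mulVec,
      Matrix.mulVec_mulVec, hAdef, stmt15_sqlem C hunit hanti e,
      Matrix.smul_mulVec, Matrix.one_mulVec, dotProduct_smul, smul_eq_mul, hψ, mul_one,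
      hsdef]
  have hupper : s ^ 2 ≤ s := by
    set x : EuclideanSpace ℂ (Fin d) := (WithLp.equiv 2 _).symm ψ with hx
    set y : EuclideanSpace ℂ (Fin d) := (WithLp.equiv 2 _).symm φ with hy
    have hxy : inner ℂ x y = (s : ℂ) := by
      rw [hx, hy, stmt15_inner, hinner]
    have hxx : ‖x‖ ^ 2 = 1 := by
      rw [← inner_self_eq_norm_sq (𝕜 := ℂ) x]
      rw [hx, stmt15_inner, hψ]
      simp
    have hyy : ‖y‖ ^ 2 = s := by
      rw [← inner_self_eq_norm_sq (𝕜 := ℂ) y]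
      rw [hy, stmt15_inner, hφφ]
      simp
    have cs := norm_inner_le_norm (𝕜 := ℂ) x y
    rw [hxy] at cs
    have : ‖(s : ℂ)‖ = s := by
      rw [Complex.norm_real, Real.norm_of_nonneg hs_nonneg]
    rw [this] at cs
    nlinarith [norm_nonneg x, norm_nonneg y]
  have hs1 : s = 1 := by nlinarith
  exact ⟨hmu, hs1⟩
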